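/- Let ν be a Lévy measure on ℝⁿ, let A be a symmetric positive semidefinite n×n real matrix, and define Re Ψ(ξ) = (1/2)⟨ξ, Aξ⟩ + ∫_{ℝⁿ} (1 − cos⟨ξ,x⟩) ν(dx). Fix I₀ ∈ (0,1). Then ∫_{‖x‖ > 1} ‖x‖^{I₀} ν(dx) < ∞ if and only if ∫_{‖ξ‖ ≤ 1} Re Ψ(ξ) / ‖ξ‖^{n+I₀} dξ < ∞. -/

import Mathlib

open MeasureTheory Complex Set

noncomputable section

open Metric
open scoped ENNReal NNReal

namespace LKAux

variable {n : ℕ}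

local notation "E" => EuclideanSpace ℝ (Fin n)

lemma rpow_annulus_le {b y α : ℝ} (hb : 0 < b) (h1 : b ≤ y) (h2 : y ≤ 2 * b) :
    y ^ α ≤ 2 ^ |α| * b ^ α := by
  have hy : 0 < y := hb.trans_le h1
  rcases le_or_gt 0 α with hα | hα
  · calc y ^ α ≤ (2 * b) ^ α := Real.rpow_le_rpow hy.le h2 hα
      _ = 2 ^ α * b ^ α := Real.mul_rpow (by norm_num) hb.le
      _ ≤ 2 ^ |α| * b ^ α := by
          have : (2:ℝ) ^ α ≤ 2 ^ |α| :=
            Real.rpow_le_rpow_of_exponent_le one_le_two (le_abs_self α)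
          exact mul_le_mul_of_nonneg_right this (Real.rpow_nonneg hb.le α)
  · calc y ^ α ≤ b ^ α := Real.rpow_le_rpow_of_nonpos hb h1 hα.le
      _ ≤ 2 ^ |α| * b ^ α := by
          nlinarith [Real.one_le_rpow (one_le_two) (_root_.abs_nonneg α),
            Real.rpow_pos_of_pos hb α]

lemma annulus_lintegral_le {b : ℝ} (hb : 0 < b) (α : ℝ) :
    ∫⁻ ξ in {ξ : E | b < ‖ξ‖ ∧ ‖ξ‖ ≤ 2 * b}, ENNReal.ofReal (‖ξ‖ ^ α)
      ≤ ENNReal.ofReal (2 ^ |α| * 2 ^ n * (b ^ α * b ^ n)) * volume (ball (0:E) 1) := by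
  have hmeas : MeasurableSet {ξ : E | b < ‖ξ‖ ∧ ‖ξ‖ ≤ 2 * b} :=
    (measurableSet_lt measurable_const measurable_norm).inter
      (measurableSet_le measurable_norm measurable_const)
  calc ∫⁻ ξ in {ξ : E | b < ‖ξ‖ ∧ ‖ξ‖ ≤ 2 * b}, ENNReal.ofReal (‖ξ‖ ^ α)
      ≤ ∫⁻ _ in {ξ : E | b < ‖ξ‖ ∧ ‖ξ‖ ≤ 2 * b}, ENNReal.ofReal (2 ^ |α| * b ^ α) :=
        setLIntegral_mono' hmeas fun ξ hξ =>
          ENNReal.ofReal_le_ofReal (rpow_annulus_le hb hξ.1.le hξ.2)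
    _ = ENNReal.ofReal (2 ^ |α| * b ^ α) * volume {ξ : E | b < ‖ξ‖ ∧ ‖ξ‖ ≤ 2 * b} :=
        setLIntegral_const _ _
    _ ≤ ENNReal.ofReal (2 ^ |α| * b ^ α) *
          (ENNReal.ofReal ((2 * b) ^ n) * volume (ball (0:E) 1)) := by
        gcongr
        have hsub : {ξ : E | b < ‖ξ‖ ∧ ‖ξ‖ ≤ 2 * b} ⊆ closedBall (0:E) (2*b) := fun ξ hξ => by
          simpa [mem_closedBall_zero_iff] using hξ.2
        calc volume {ξ : E | b < ‖ξ‖ ∧ ‖ξ‖ ≤ 2 * b} ≤ volume (closedBall (0:E) (2*b)) :=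
              measure_mono hsub
          _ = ENNReal.ofReal ((2*b) ^ Module.finrank ℝ (EuclideanSpace ℝ (Fin n))) *
                volume (ball (0:E) 1) := Measure.addHaar_closedBall _ _ (by positivity)
          _ = ENNReal.ofReal ((2*b) ^ n) * volume (ball (0:E) 1) := by
              rw [finrank_euclideanSpace_fin]
    _ = ENNReal.ofReal (2 ^ |α| * 2 ^ n * (b ^ α * b ^ n)) * volume (ball (0:E) 1) := by
        rw [← mul_assoc, ← ENNReal.ofReal_mul (by positivity)]
        ring_nf

/-- Dyadic-decomposition bound: `∫_{‖ξ‖ ≤ ρ} ‖ξ‖^(s-n) dξ ≤ C ρ^s` for `s > 0`. -/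
lemma lintegral_ball_rpow_le (hn : 0 < n) {s : ℝ} (hs : 0 < s) :
    ∃ C : ℝ≥0∞, C ≠ ∞ ∧ ∀ ρ : ℝ, 0 < ρ →
      ∫⁻ ξ in closedBall (0 : E) ρ, ENNReal.ofReal (‖ξ‖ ^ (s - n))
        ≤ C * ENNReal.ofReal (ρ ^ s) := by
  haveI : Nonempty (Fin n) := ⟨⟨0, hn⟩⟩
  set α : ℝ := s - n with hα
  set r : ℝ := (2:ℝ)⁻¹ ^ s with hrdef
  have hr0 : 0 ≤ r := Real.rpow_nonneg (by norm_num) s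
  have hq1 : ENNReal.ofReal r < 1 := by
    rw [← ENNReal.ofReal_one]
    exact (ENNReal.ofReal_lt_ofReal_iff one_pos).2
      (Real.rpow_lt_one (by norm_num) (by norm_num) hs)
  have hq1' : (1:ℝ≥0∞) - ENNReal.ofReal r ≠ 0 := by simpa [pos_iff_ne_zero] using tsub_pos_of_lt hq1
  refine ⟨ENNReal.ofReal (2 ^ |α| * 2 ^ n) * volume (ball (0:E) 1) * (1 - ENNReal.ofReal r)⁻¹, ?_, ?_⟩
  · exact ENNReal.mul_ne_top (ENNReal.mul_ne_top ENNReal.ofReal_ne_top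
      measure_ball_lt_top.ne) (ENNReal.inv_ne_top.2 hq1')
  intro ρ hρ
  set b : ℕ → ℝ := fun k => ρ * (2⁻¹:ℝ) ^ (k+1) with hbdef
  have hbpos : ∀ k, 0 < b k := fun k => by positivity
  set A : ℕ → Set E := fun k => {ξ : E | b k < ‖ξ‖ ∧ ‖ξ‖ ≤ 2 * b k} with hAdef
  have hcover : closedBall (0:E) ρ ⊆ {(0:E)} ∪ ⋃ k, A k := by
    intro ξ hξ
    rcases eq_or_ne ξ 0 with h | h
    · exact Or.inl (by simp [h])
    · refine Or.inr (mem_iUnion.2 ?_)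
      have hξ0 : 0 < ‖ξ‖ := norm_pos_iff.2 h
      have hle : ‖ξ‖ ≤ ρ := mem_closedBall_zero_iff.1 hξ
      have hex : ∃ k, b k < ‖ξ‖ := by
        obtain ⟨k, hk⟩ := exists_pow_lt_of_lt_one (div_pos hξ0 hρ) (by norm_num : (2⁻¹:ℝ) < 1)
        refine ⟨k, ?_⟩
        have h1 : (2⁻¹:ℝ) ^ (k+1) ≤ (2⁻¹:ℝ) ^ k :=
          pow_le_pow_of_le_one (by norm_num) (by norm_num) (Nat.le_succ k)
        have := (lt_div_iff₀ hρ).1 hk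
        calc b k = ρ * (2⁻¹:ℝ) ^ (k+1) := rfl
          _ ≤ ρ * (2⁻¹:ℝ) ^ k := by nlinarith
          _ < ‖ξ‖ := by nlinarith
      refine ⟨Nat.find hex, Nat.find_spec hex, ?_⟩
      rcases Nat.eq_zero_or_pos (Nat.find hex) with h0 | hpos
      · rw [h0]
        calc ‖ξ‖ ≤ ρ := hle
          _ = 2 * b 0 := by simp [hbdef]; ring
      · obtain ⟨m, hm⟩ := Nat.exists_eq_succ_of_ne_zero hpos.ne'
        rw [hm]
        have := Nat.find_min hex (hm ▸ Nat.lt_succ_self m)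
        push_neg at this
        calc ‖ξ‖ ≤ b m := this
          _ = 2 * b (m+1) := by simp [hbdef]; ring
  have hterm : ∀ k : ℕ, ∫⁻ ξ in A k, ENNReal.ofReal (‖ξ‖ ^ α)
      ≤ (ENNReal.ofReal (2 ^ |α| * 2 ^ n) * volume (ball (0:E) 1) * ENNReal.ofReal (ρ ^ s))
          * ENNReal.ofReal r ^ (k+1) := by
    intro k
    have hb : b k ^ α * b k ^ n = ρ ^ s * r ^ (k+1) := by
      have h1 : (b k) ^ n = (b k) ^ ((n:ℕ):ℝ) := (Real.rpow_natCast _ n).symm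
      rw [h1, ← Real.rpow_add (hbpos k), hα, sub_add_cancel, hbdef]
      have h2 : ((2⁻¹:ℝ) ^ (k+1)) ^ s = r ^ (k+1) := by
        rw [← Real.rpow_natCast (2⁻¹:ℝ) (k+1), ← Real.rpow_mul (by norm_num),
          mul_comm ((k+1:ℕ):ℝ) s, Real.rpow_mul (by norm_num), Real.rpow_natCast, hrdef]
      rw [Real.mul_rpow hρ.le (by positivity), h2]
    calc ∫⁻ ξ in A k, ENNReal.ofReal (‖ξ‖ ^ α)
        ≤ ENNReal.ofReal (2 ^ |α| * 2 ^ n * (b k ^ α * b k ^ n)) * volume (ball (0:E) 1) :=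
          annulus_lintegral_le (hbpos k) α
      _ = (ENNReal.ofReal (2 ^ |α| * 2 ^ n) * volume (ball (0:E) 1) * ENNReal.ofReal (ρ ^ s))
            * ENNReal.ofReal r ^ (k+1) := by
          rw [hb, ENNReal.ofReal_mul (show (0:ℝ) ≤ 2 ^ |α| * 2 ^ n by positivity),
            ENNReal.ofReal_mul (Real.rpow_nonneg hρ.le s), ← ENNReal.ofReal_pow hr0]
          ring
  calc ∫⁻ ξ in closedBall (0:E) ρ, ENNReal.ofReal (‖ξ‖ ^ α)
      ≤ ∫⁻ ξ in {(0:E)} ∪ ⋃ k, A k, ENNReal.ofReal (‖ξ‖ ^ α) := lintegral_mono_set hcover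
    _ ≤ (∫⁻ ξ in {(0:E)}, ENNReal.ofReal (‖ξ‖ ^ α))
          + ∫⁻ ξ in ⋃ k, A k, ENNReal.ofReal (‖ξ‖ ^ α) := lintegral_union_le _ _ _
    _ ≤ 0 + ∑' k, ∫⁻ ξ in A k, ENNReal.ofReal (‖ξ‖ ^ α) := by
        gcongr
        · exact le_of_eq (setLIntegral_measure_zero _ _ (measure_singleton 0))
        · exact lintegral_iUnion_le _ _
    _ ≤ ∑' k, (ENNReal.ofReal (2 ^ |α| * 2 ^ n) * volume (ball (0:E) 1) * ENNReal.ofReal (ρ ^ s))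
          * ENNReal.ofReal r ^ (k+1) := by rw [zero_add]; exact ENNReal.tsum_le_tsum hterm
    _ ≤ ENNReal.ofReal (2 ^ |α| * 2 ^ n) * volume (ball (0:E) 1) * (1 - ENNReal.ofReal r)⁻¹
          * ENNReal.ofReal (ρ ^ s) := by
        rw [ENNReal.tsum_mul_left]
        have h1 : ∑' k : ℕ, ENNReal.ofReal r ^ (k+1) ≤ (1 - ENNReal.ofReal r)⁻¹ := by
          rw [← ENNReal.tsum_geometric (ENNReal.ofReal r)]
          exact ENNReal.tsum_le_tsum fun k => pow_le_pow_of_le_one zero_le hq1.le (Nat.le_succ k)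
        calc _ ≤ (ENNReal.ofReal (2 ^ |α| * 2 ^ n) * volume (ball (0:E) 1)
              * ENNReal.ofReal (ρ ^ s)) * (1 - ENNReal.ofReal r)⁻¹ := by gcongr
          _ = _ := by ring

/-- Dyadic bound: `∫_{‖ξ‖ > ρ} ‖ξ‖^(-n-t) dξ ≤ C ρ^(-t)` for `t > 0`. -/
lemma lintegral_compl_ball_rpow_le (hn : 0 < n) {t : ℝ} (ht : 0 < t) :
    ∃ C : ℝ≥0∞, C ≠ ∞ ∧ ∀ ρ : ℝ, 0 < ρ →
      ∫⁻ ξ in {ξ : E | ρ < ‖ξ‖}, ENNReal.ofReal (‖ξ‖ ^ (-(n:ℝ) - t))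
        ≤ C * ENNReal.ofReal (ρ ^ (-t)) := by
  set α : ℝ := -(n:ℝ) - t with hα
  set r : ℝ := (2:ℝ) ^ (-t) with hrdef
  have hr0 : 0 ≤ r := Real.rpow_nonneg (by norm_num) _
  have hq1 : ENNReal.ofReal r < 1 := by
    rw [← ENNReal.ofReal_one]
    exact (ENNReal.ofReal_lt_ofReal_iff one_pos).2
      (Real.rpow_lt_one_of_one_lt_of_neg one_lt_two (neg_lt_zero.2 ht))
  have hq1' : (1:ℝ≥0∞) - ENNReal.ofReal r ≠ 0 := by
    simpa [pos_iff_ne_zero] using tsub_pos_of_lt hq1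
  refine ⟨ENNReal.ofReal (2 ^ |α| * 2 ^ n) * volume (ball (0:E) 1) * (1 - ENNReal.ofReal r)⁻¹,
    ENNReal.mul_ne_top (ENNReal.mul_ne_top ENNReal.ofReal_ne_top measure_ball_lt_top.ne)
      (ENNReal.inv_ne_top.2 hq1'), ?_⟩
  intro ρ hρ
  set b : ℕ → ℝ := fun k => ρ * (2:ℝ) ^ k with hbdef
  have hbpos : ∀ k, 0 < b k := fun k => by positivity
  set A : ℕ → Set E := fun k => {ξ : E | b k < ‖ξ‖ ∧ ‖ξ‖ ≤ 2 * b k} with hAdef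
  have hcover : {ξ : E | ρ < ‖ξ‖} ⊆ ⋃ k, A k := by
    intro ξ hξ
    have hξρ : ρ < ‖ξ‖ := hξ
    refine mem_iUnion.2 ?_
    have hex : ∃ k, ‖ξ‖ ≤ 2 * b k := by
      obtain ⟨k, hk⟩ := pow_unbounded_of_one_lt (‖ξ‖ / ρ) (one_lt_two (α := ℝ))
      refine ⟨k, ?_⟩
      have := (div_lt_iff₀ hρ).1 hk
      have h2 : (0:ℝ) < 2 ^ k := by positivity
      calc ‖ξ‖ ≤ ρ * 2 ^ k := by nlinarith
        _ ≤ 2 * b k := by simp only [hbdef]; nlinarith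
    refine ⟨Nat.find hex, ?_, Nat.find_spec hex⟩
    rcases Nat.eq_zero_or_pos (Nat.find hex) with h0 | hpos
    · rw [h0]
      calc b 0 = ρ := by simp [hbdef]
        _ < ‖ξ‖ := hξρ
    · obtain ⟨m, hm⟩ := Nat.exists_eq_succ_of_ne_zero hpos.ne'
      rw [hm]
      have := Nat.find_min hex (hm ▸ Nat.lt_succ_self m)
      push_neg at this
      calc b (m+1) = 2 * b m := by simp only [hbdef]; ring
        _ < ‖ξ‖ := this
  have hterm : ∀ k : ℕ, ∫⁻ ξ in A k, ENNReal.ofReal (‖ξ‖ ^ α)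
      ≤ (ENNReal.ofReal (2 ^ |α| * 2 ^ n) * volume (ball (0:E) 1) * ENNReal.ofReal (ρ ^ (-t)))
          * ENNReal.ofReal r ^ k := by
    intro k
    have hb : b k ^ α * b k ^ n = ρ ^ (-t) * r ^ k := by
      have h1 : (b k) ^ n = (b k) ^ ((n:ℕ):ℝ) := (Real.rpow_natCast _ n).symm
      have h2 : α + (n:ℝ) = -t := by rw [hα]; ring
      rw [h1, ← Real.rpow_add (hbpos k), h2, hbdef]
      have h3 : ((2:ℝ) ^ k) ^ (-t) = r ^ k := by
        rw [← Real.rpow_natCast (2:ℝ) k, ← Real.rpow_mul (by norm_num),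
          mul_comm ((k:ℕ):ℝ) (-t), Real.rpow_mul (by norm_num), Real.rpow_natCast, hrdef]
      rw [Real.mul_rpow hρ.le (by positivity), h3]
    calc ∫⁻ ξ in A k, ENNReal.ofReal (‖ξ‖ ^ α)
        ≤ ENNReal.ofReal (2 ^ |α| * 2 ^ n * (b k ^ α * b k ^ n)) * volume (ball (0:E) 1) :=
          annulus_lintegral_le (hbpos k) α
      _ = (ENNReal.ofReal (2 ^ |α| * 2 ^ n) * volume (ball (0:E) 1) * ENNReal.ofReal (ρ ^ (-t)))
            * ENNReal.ofReal r ^ k := by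
          rw [hb, ENNReal.ofReal_mul (show (0:ℝ) ≤ 2 ^ |α| * 2 ^ n by positivity),
            ENNReal.ofReal_mul (Real.rpow_nonneg hρ.le _), ← ENNReal.ofReal_pow hr0]
          ring
  calc ∫⁻ ξ in {ξ : E | ρ < ‖ξ‖}, ENNReal.ofReal (‖ξ‖ ^ α)
      ≤ ∫⁻ ξ in ⋃ k, A k, ENNReal.ofReal (‖ξ‖ ^ α) := lintegral_mono_set hcover
    _ ≤ ∑' k, ∫⁻ ξ in A k, ENNReal.ofReal (‖ξ‖ ^ α) := lintegral_iUnion_le _ _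
    _ ≤ ∑' k, (ENNReal.ofReal (2 ^ |α| * 2 ^ n) * volume (ball (0:E) 1)
          * ENNReal.ofReal (ρ ^ (-t))) * ENNReal.ofReal r ^ k := ENNReal.tsum_le_tsum hterm
    _ ≤ ENNReal.ofReal (2 ^ |α| * 2 ^ n) * volume (ball (0:E) 1) * (1 - ENNReal.ofReal r)⁻¹
          * ENNReal.ofReal (ρ ^ (-t)) := by
        rw [ENNReal.tsum_mul_left, ← ENNReal.tsum_geometric (ENNReal.ofReal r)]
        calc _ ≤ (ENNReal.ofReal (2 ^ |α| * 2 ^ n) * volume (ball (0:E) 1)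
              * ENNReal.ofReal (ρ ^ (-t))) * ∑' k, ENNReal.ofReal r ^ k := le_rfl
          _ = _ := by rw [ENNReal.tsum_geometric]; ring

lemma coord_abs_le_norm (x : E) (i : Fin n) : |x i| ≤ ‖x‖ := by
  rw [EuclideanSpace.norm_eq, ← Real.sqrt_sq_eq_abs]
  apply Real.sqrt_le_sqrt
  simpa [Real.norm_eq_abs, _root_.sq_abs] using
    Finset.single_le_sum (fun j _ => sq_nonneg (‖x j‖)) (Finset.mem_univ i)

lemma mul_mem_uIcc_right {a b c t : ℝ} (h : t ∈ Set.uIcc a b) :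
    t * c ∈ Set.uIcc (a * c) (b * c) := by
  rcases Set.mem_uIcc.1 h with ⟨h1, h2⟩ | ⟨h1, h2⟩ <;> rcases le_total 0 c with hc | hc
  · exact Set.mem_uIcc.2 (Or.inl
      ⟨mul_le_mul_of_nonneg_right h1 hc, mul_le_mul_of_nonneg_right h2 hc⟩)
  · exact Set.mem_uIcc.2 (Or.inr
      ⟨mul_le_mul_of_nonpos_right h2 hc, mul_le_mul_of_nonpos_right h1 hc⟩)
  · exact Set.mem_uIcc.2 (Or.inr
      ⟨mul_le_mul_of_nonneg_right h1 hc, mul_le_mul_of_nonneg_right h2 hc⟩)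
  · exact Set.mem_uIcc.2 (Or.inl
      ⟨mul_le_mul_of_nonpos_right h2 hc, mul_le_mul_of_nonpos_right h1 hc⟩)

set_option maxHeartbeats 1000000 in
/-- The key lower bound: `H x ≥ c ‖x‖^(p-n)` for `‖x‖ > 1`. -/
lemma lower_bound (hn : 0 < n) {p : ℝ} (hp : 0 ≤ p) :
    ∃ c : ℝ, 0 < c ∧ ∀ x : E, 1 < ‖x‖ →
      ENNReal.ofReal (c * ‖x‖ ^ (p - n)) ≤
        ∫⁻ ξ in closedBall (0:E) 1,
          ENNReal.ofReal (1 - Real.cos (inner ℝ ξ x : ℝ)) * (ENNReal.ofReal (‖ξ‖ ^ p))⁻¹ := by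
  have hsq : (1:ℝ) ≤ Real.sqrt n := by
    rw [show (1:ℝ) = Real.sqrt 1 by simp]
    exact Real.sqrt_le_sqrt (by exact_mod_cast hn)
  have hsqpos : (0:ℝ) < Real.sqrt n := lt_of_lt_of_le one_pos hsq
  set β : ℝ := (2 * Real.sqrt n)⁻¹ with hβdef
  have hβpos : 0 < β := by positivity
  have hβle : β ≤ 1/2 := by
    rw [hβdef]
    rw [inv_le_comm₀ (by positivity) (by norm_num)]
    nlinarith
  have hβsq : β * Real.sqrt n = 1/2 := by
    rw [hβdef]; field_simp
  have hc0 : 0 < 1 - Real.cos (3*β/4) := by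
    have h1 : Real.cos (3*β/4) < Real.cos 0 :=
      Real.cos_lt_cos_of_nonneg_of_le_pi le_rfl
        (by nlinarith [Real.pi_gt_three]) (by nlinarith)
    simpa [Real.cos_zero] using h1
  refine ⟨(1 - Real.cos (3*β/4)) * ((β/2) * (β/(2*n)) ^ (n-1)), by positivity, ?_⟩
  intro x hR
  have hxne : x ≠ 0 := by
    intro h; rw [h] at hR; simp at hR; linarith
  set R : ℝ := ‖x‖ with hRdef
  have hR0 : (0:ℝ) < R := lt_trans one_pos hR
  obtain ⟨i₀, hi₀⟩ : ∃ i, ∀ j, |x j| ≤ |x i| := by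
    have hne : (Finset.univ : Finset (Fin n)).Nonempty := by
      have : Nonempty (Fin n) := ⟨⟨0, hn⟩⟩
      exact Finset.univ_nonempty
    obtain ⟨i, _, h⟩ := Finset.exists_max_image Finset.univ (fun i => |x i|) hne
    exact ⟨i, fun j => h j (Finset.mem_univ j)⟩
  have hRxi : R ≤ Real.sqrt n * |x i₀| := by
    have h1 : ∑ j, x j ^ 2 ≤ (n:ℝ) * x i₀ ^ 2 := by
      calc ∑ j, x j ^ 2 ≤ ∑ _j : Fin n, x i₀ ^ 2 := by
            apply Finset.sum_le_sum
            intro j _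
            have := hi₀ j
            nlinarith [_root_.abs_nonneg (x j), _root_.abs_nonneg (x i₀), _root_.sq_abs (x j), _root_.sq_abs (x i₀)]
        _ = (n:ℝ) * x i₀ ^ 2 := by simp [Finset.sum_const, Finset.card_univ, nsmul_eq_mul]
    calc R = Real.sqrt (∑ j, x j ^ 2) := by
          rw [hRdef, EuclideanSpace.norm_eq]; simp [Real.norm_eq_abs, _root_.sq_abs]
      _ ≤ Real.sqrt ((n:ℝ) * x i₀ ^ 2) := Real.sqrt_le_sqrt h1
      _ = Real.sqrt n * |x i₀| := by
          rw [Real.sqrt_mul (by positivity), Real.sqrt_sq_eq_abs]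
  have hxi₀pos : 0 < |x i₀| := by nlinarith
  have hxi₀ne : x i₀ ≠ 0 := abs_pos.1 hxi₀pos
  have hxi₀R : |x i₀| ≤ R := coord_abs_le_norm x i₀
  set δ : ℝ := β / (4 * n * R) with hδdef
  have hδpos : 0 < δ := by
    have : (0:ℝ) < n := by exact_mod_cast hn
    positivity
  set I : Fin n → Set ℝ :=
    fun j => if j = i₀ then Set.uIcc (β / x i₀) (3*β/2 / x i₀) else Icc (-δ) δ with hIdef
  have hImeas : ∀ j, MeasurableSet (I j) := by
    intro j
    rcases eq_or_ne j i₀ with h | h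
    · simpa [hIdef, h] using
        (measurableSet_uIcc : MeasurableSet (Set.uIcc (β / x i₀) (3*β/2 / x i₀)))
    · simpa [hIdef, h] using (measurableSet_Icc : MeasurableSet (Icc (-δ) δ))
  set T : Set E := (MeasurableEquiv.toLp 2 (Fin n → ℝ)).symm ⁻¹' (Set.univ.pi I) with hTdef
  have hTmem : ∀ ξ : E, ξ ∈ T ↔ ∀ j, ξ j ∈ I j := by
    intro ξ
    rw [hTdef]
    simp [Set.mem_pi]
  have hTmeas : MeasurableSet T :=
    (MeasurableEquiv.toLp 2 (Fin n → ℝ)).symm.measurable (MeasurableSet.univ_pi hImeas)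
  -- pointwise facts on T
  have hprod : ∀ ξ : E, ξ ∈ T → ξ i₀ * x i₀ ∈ Icc β (3*β/2) := by
    intro ξ hξ
    have h1 := (hTmem ξ).1 hξ i₀
    simp only [hIdef, if_pos rfl] at h1
    have h2 := mul_mem_uIcc_right (c := x i₀) h1
    rw [div_mul_cancel₀ _ hxi₀ne, div_mul_cancel₀ _ hxi₀ne] at h2
    rwa [Set.uIcc_of_le (by linarith)] at h2
  have hother : ∀ ξ : E, ξ ∈ T → ∀ j, j ≠ i₀ → |ξ j| ≤ δ := by
    intro ξ hξ j hj
    have h1 := (hTmem ξ).1 hξ j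
    simp only [hIdef, if_neg hj] at h1
    exact abs_le.2 ⟨h1.1, h1.2⟩
  have hinner_eq : ∀ ξ : E, (inner ℝ ξ x : ℝ) = ∑ j, ξ j * x j := by
    intro ξ; simp [PiLp.inner_apply, mul_comm]
  have hrest : ∀ ξ : E, ξ ∈ T → |∑ j ∈ Finset.univ.erase i₀, ξ j * x j| ≤ β/4 := by
    intro ξ hξ
    calc |∑ j ∈ Finset.univ.erase i₀, ξ j * x j| ≤ ∑ j ∈ Finset.univ.erase i₀, |ξ j * x j| :=
          Finset.abs_sum_le_sum_abs _ _
      _ ≤ ∑ _j ∈ Finset.univ.erase i₀, δ * R := by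
          apply Finset.sum_le_sum
          intro j hj
          rw [_root_.abs_mul]
          exact mul_le_mul (hother ξ hξ j (Finset.ne_of_mem_erase hj)) (coord_abs_le_norm x j)
            (_root_.abs_nonneg _) hδpos.le
      _ ≤ (n:ℝ) * (δ * R) := by
          rw [Finset.sum_const, nsmul_eq_mul]
          have hcard : ((Finset.univ.erase i₀).card : ℝ) ≤ (n:ℝ) := by
            have h1 := Finset.card_erase_le (s := (Finset.univ : Finset (Fin n))) (a := i₀)
            have h2 : (Finset.univ : Finset (Fin n)).card = n := by simp
            exact_mod_cast h1.trans h2.le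
          nlinarith [mul_pos hδpos hR0]
      _ = β/4 := by
          rw [hδdef]
          have hn' : ((n:ℝ)) ≠ 0 := ne_of_gt (by exact_mod_cast hn)
          field_simp
  have hinner_mem : ∀ ξ : E, ξ ∈ T → (inner ℝ ξ x : ℝ) ∈ Icc (3*β/4) (7*β/4) := by
    intro ξ hξ
    have h1 := hprod ξ hξ
    have h2 := abs_le.1 (hrest ξ hξ)
    have h3 : (inner ℝ ξ x : ℝ) = ξ i₀ * x i₀ + ∑ j ∈ Finset.univ.erase i₀, ξ j * x j := by
      rw [hinner_eq ξ, ← Finset.add_sum_erase Finset.univ _ (Finset.mem_univ i₀)]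
    constructor
    · rw [h3]; have := h1.1; linarith [h2.1]
    · rw [h3]; have := h1.2; linarith [h2.2]
  have hnormT : ∀ ξ : E, ξ ∈ T → ‖ξ‖ ≤ R⁻¹ := by
    intro ξ hξ
    have hξi₀ : |ξ i₀| ≤ 3*β/2 / |x i₀| := by
      have h1 := hprod ξ hξ
      have h2 : |ξ i₀| * |x i₀| = |ξ i₀ * x i₀| := (_root_.abs_mul _ _).symm
      have h3 : |ξ i₀ * x i₀| ≤ 3*β/2 := by
        rw [_root_.abs_of_nonneg (by linarith [h1.1])]
        exact h1.2
      rw [le_div_iff₀ hxi₀pos]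
      nlinarith
    have hξi₀R : |ξ i₀| ≤ 3/(4*R) := by
      have h4 : 3*β/2 / |x i₀| ≤ 3*β/2 * Real.sqrt n / R := by
        rw [div_le_div_iff₀ hxi₀pos hR0]
        nlinarith
      have h5 : 3*β/2 * Real.sqrt n / R = 3/(4*R) := by
        have h6 : 3*β/2 * Real.sqrt n = 3/4 := by linear_combination (3/2) * hβsq
        rw [h6]
        ring
      linarith [hξi₀, h4.trans_eq h5]
    have hsum : ∑ j, ξ j ^ 2 ≤ (R⁻¹)^2 := by
      have hsplit : ∑ j, ξ j ^ 2 = ξ i₀ ^ 2 + ∑ j ∈ Finset.univ.erase i₀, ξ j ^ 2 :=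
        (Finset.add_sum_erase Finset.univ _ (Finset.mem_univ i₀)).symm
      have hrest2 : ∑ j ∈ Finset.univ.erase i₀, ξ j ^ 2 ≤ (n:ℝ) * δ^2 := by
        calc ∑ j ∈ Finset.univ.erase i₀, ξ j ^ 2 ≤ ∑ _j ∈ Finset.univ.erase i₀, δ^2 := by
              apply Finset.sum_le_sum
              intro j hj
              have := hother ξ hξ j (Finset.ne_of_mem_erase hj)
              nlinarith [_root_.abs_nonneg (ξ j), _root_.sq_abs (ξ j)]
          _ ≤ (n:ℝ) * δ^2 := by
              rw [Finset.sum_const, nsmul_eq_mul]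
              have : ((Finset.univ.erase i₀).card : ℝ) ≤ (n:ℝ) := by
                have h1 := Finset.card_erase_le (s := (Finset.univ : Finset (Fin n))) (a := i₀)
                have h2 : (Finset.univ : Finset (Fin n)).card = n := by simp
                exact_mod_cast h1.trans h2.le
              nlinarith [sq_nonneg δ]
      have hδ2 : (n:ℝ) * δ^2 ≤ 1/(16 * R^2) := by
        have hn1 : (1:ℝ) ≤ (n:ℝ) := by exact_mod_cast hn
        have hnne : ((n:ℝ)) ≠ 0 := by linarith
        have hβ2 : β^2 ≤ 1 := by nlinarith
        have h1 : (n:ℝ) * δ^2 = β^2 / (16*(n:ℝ)*R^2) := by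
          rw [hδdef]; field_simp; ring
        rw [h1]
        calc β^2 / (16*(n:ℝ)*R^2) ≤ 1 / (16*1*R^2) := by gcongr
          _ = 1/(16*R^2) := by norm_num
      have hxi2 : ξ i₀ ^ 2 ≤ 9/(16 * R^2) := by
        have := hξi₀R
        have h9 : ξ i₀ ^ 2 ≤ (3/(4*R))^2 := by
          nlinarith [_root_.abs_nonneg (ξ i₀), _root_.sq_abs (ξ i₀)]
        calc ξ i₀ ^2 ≤ (3/(4*R))^2 := h9
          _ = 9/(16*R^2) := by field_simp; ring
      have : (R⁻¹)^2 = 1/(R^2) := by field_simp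
      rw [hsplit, this]
      have h10 : 9/(16*R^2) + 1/(16*R^2) ≤ 1/R^2 := by
        rw [← add_div, div_le_div_iff₀ (by positivity) (by positivity)]
        ring_nf
        nlinarith [sq_nonneg R]
      linarith
    have : ‖ξ‖ = Real.sqrt (∑ j, ξ j ^ 2) := by
      rw [EuclideanSpace.norm_eq]; simp [Real.norm_eq_abs, _root_.sq_abs]
    rw [this]
    calc Real.sqrt (∑ j, ξ j ^ 2) ≤ Real.sqrt ((R⁻¹)^2) := Real.sqrt_le_sqrt hsum
      _ = R⁻¹ := Real.sqrt_sq (by positivity)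
  -- volume of the box
  have hvol : ENNReal.ofReal ((β/(2*R)) * (2*δ)^(n-1)) ≤ volume T := by
    have h1 : volume T = ∏ j, volume (I j) := by
      rw [hTdef, (EuclideanSpace.volume_preserving_symm_measurableEquiv_toLp (Fin n)).measure_preimage
        (MeasurableSet.univ_pi hImeas).nullMeasurableSet]
      exact volume_pi_pi I
    have h3 : volume (I i₀) = ENNReal.ofReal (β/(2*|x i₀|)) := by
      have he : I i₀ = Set.uIcc (β / x i₀) (3*β/2 / x i₀) := by simp [hIdef]
      rw [he, Real.volume_interval]
      congr 1
      have he2 : 3*β/2 / x i₀ - β / x i₀ = (β/2) / x i₀ := by ring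
      rw [he2, _root_.abs_div, _root_.abs_of_pos (by linarith : (0:ℝ) < β/2), div_div]
    have h4 : ∀ j ∈ Finset.univ.erase i₀, volume (I j) = ENNReal.ofReal (2*δ) := by
      intro j hj
      have hj' := Finset.ne_of_mem_erase hj
      have he : I j = Icc (-δ) δ := by simp [hIdef, hj']
      rw [he, Real.volume_Icc]
      congr 1; ring
    have h5 : ∏ j ∈ Finset.univ.erase i₀, volume (I j) = ENNReal.ofReal (2*δ) ^ (n-1) := by
      rw [Finset.prod_congr rfl h4, Finset.prod_const, Finset.card_erase_of_mem (Finset.mem_univ i₀)]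
      simp
    rw [h1, ← Finset.mul_prod_erase _ _ (Finset.mem_univ i₀), h3, h5,
      ← ENNReal.ofReal_pow (by positivity), ← ENNReal.ofReal_mul (by positivity)]
    apply ENNReal.ofReal_le_ofReal
    have : β/(2*R) ≤ β/(2*|x i₀|) := by
      apply div_le_div_of_nonneg_left hβpos.le (by positivity)
      linarith
    have hpow : (0:ℝ) ≤ (2*δ)^(n-1) := by positivity
    nlinarith
  -- the real-number identity
  have hkey : (1 - Real.cos (3*β/4)) * ((β/2) * (β/(2*n)) ^ (n-1)) * R ^ (p - n)
      = (1 - Real.cos (3*β/4)) * R ^ p * ((β/(2*R)) * (2*δ)^(n-1)) := by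
    obtain ⟨m, hm⟩ : ∃ m, n = m + 1 := ⟨n-1, by omega⟩
    have hmn : n - 1 = m := by omega
    have hnne : ((n:ℝ)) ≠ 0 := ne_of_gt (by exact_mod_cast hn)
    have h2δ : 2*δ = β/(2*n) * R⁻¹ := by rw [hδdef]; field_simp; ring
    have hRp : R ^ p = R ^ (p - (n:ℝ)) * R ^ (n:ℕ) := by
      rw [← Real.rpow_natCast R n, ← Real.rpow_add hR0]
      congr 1; ring
    rw [h2δ, hRp, hmn, mul_pow, show R ^ (n:ℕ) = R ^ m * R by rw [hm, pow_succ]]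
    field_simp
    ring
    rw [← mul_pow, mul_inv_cancel₀ hR0.ne', one_pow]
  calc ENNReal.ofReal ((1 - Real.cos (3*β/4)) * ((β/2) * (β/(2*n)) ^ (n-1)) * R ^ (p - n))
      = ENNReal.ofReal ((1 - Real.cos (3*β/4)) * R ^ p * ((β/(2*R)) * (2*δ)^(n-1))) := by
        rw [hkey]
    _ = ENNReal.ofReal ((1 - Real.cos (3*β/4)) * R ^ p) *
          ENNReal.ofReal ((β/(2*R)) * (2*δ)^(n-1)) := ENNReal.ofReal_mul (by positivity)
    _ ≤ ENNReal.ofReal ((1 - Real.cos (3*β/4)) * R ^ p) * volume T := by gcongr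
    _ = ∫⁻ _ in T, ENNReal.ofReal ((1 - Real.cos (3*β/4)) * R ^ p) :=
        (setLIntegral_const _ _).symm
    _ ≤ ∫⁻ ξ in T, ENNReal.ofReal (1 - Real.cos (inner ℝ ξ x : ℝ)) *
          (ENNReal.ofReal (‖ξ‖ ^ p))⁻¹ := by
        apply setLIntegral_mono' hTmeas
        intro ξ hξ
        rw [ENNReal.ofReal_mul hc0.le]
        have hmem := hinner_mem ξ hξ
        apply mul_le_mul'
        · apply ENNReal.ofReal_le_ofReal
          have hcos : Real.cos (inner ℝ ξ x : ℝ) ≤ Real.cos (3*β/4) :=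
            Real.cos_le_cos_of_nonneg_of_le_pi (by linarith)
              (by nlinarith [Real.pi_gt_three, hmem.2]) hmem.1
          linarith
        · have h1 : ‖ξ‖ ^ p ≤ (R⁻¹) ^ p := Real.rpow_le_rpow (norm_nonneg ξ) (hnormT ξ hξ) hp
          have h2 : (ENNReal.ofReal ((R⁻¹)^p))⁻¹ ≤ (ENNReal.ofReal (‖ξ‖^p))⁻¹ :=
            ENNReal.inv_le_inv.2 (ENNReal.ofReal_le_ofReal h1)
          have h3 : (ENNReal.ofReal ((R⁻¹)^p))⁻¹ = ENNReal.ofReal (R^p) := by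
            rw [Real.inv_rpow hR0.le, ENNReal.ofReal_inv_of_pos (Real.rpow_pos_of_pos hR0 p),
              inv_inv]
          rw [← h3]
          exact h2
    _ ≤ ∫⁻ ξ in closedBall (0:E) 1, ENNReal.ofReal (1 - Real.cos (inner ℝ ξ x : ℝ)) *
          (ENNReal.ofReal (‖ξ‖ ^ p))⁻¹ := by
        apply lintegral_mono_set
        intro ξ hξ
        have h1 := hnormT ξ hξ
        have h2 : R⁻¹ ≤ 1 := by
          rw [inv_le_one_iff₀]
          right; exact hR.le
        exact mem_closedBall_zero_iff.2 (h1.trans h2)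

lemma one_sub_cos_le_sq (t : ℝ) : 1 - Real.cos t ≤ t^2/2 := by
  have := Real.one_sub_sq_div_two_le_cos (x := t)
  linarith

lemma one_sub_cos_le_two (t : ℝ) : 1 - Real.cos t ≤ 2 := by
  have := Real.neg_one_le_cos t
  linarith

lemma one_sub_cos_nonneg (t : ℝ) : 0 ≤ 1 - Real.cos t := by
  have := Real.cos_le_one t
  linarith

set_option maxHeartbeats 1000000 in
lemma upper_bound (hn : 0 < n) {I₀ : ℝ} (hI₀ : I₀ ∈ Set.Ioo (0:ℝ) 1) :
    ∃ Cu : ℝ≥0∞, Cu ≠ ∞ ∧ ∀ x : E,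
      (‖x‖ ≤ 1 →
        (∫⁻ ξ in closedBall (0:E) 1, ENNReal.ofReal (1 - Real.cos (inner ℝ ξ x : ℝ)) *
          (ENNReal.ofReal (‖ξ‖ ^ ((n:ℝ) + I₀)))⁻¹)
        ≤ Cu * ENNReal.ofReal (min 1 (‖x‖^2))) ∧
      (1 ≤ ‖x‖ →
        (∫⁻ ξ in closedBall (0:E) 1, ENNReal.ofReal (1 - Real.cos (inner ℝ ξ x : ℝ)) *
          (ENNReal.ofReal (‖ξ‖ ^ ((n:ℝ) + I₀)))⁻¹)
        ≤ Cu * ENNReal.ofReal (‖x‖ ^ I₀)) := by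
  obtain ⟨hI₀0, hI₀1⟩ := hI₀
  haveI : Nonempty (Fin n) := ⟨⟨0, hn⟩⟩
  set p : ℝ := (n:ℝ) + I₀ with hpdef
  have hppos : 0 < p := by positivity
  obtain ⟨CA, hCAne, hCA⟩ := lintegral_ball_rpow_le (n := n) hn (s := 2 - I₀) (by linarith)
  obtain ⟨CB, hCBne, hCB⟩ := lintegral_compl_ball_rpow_le (n := n) hn (t := I₀) hI₀0
  -- pointwise bounds
  have hpt1 : ∀ (x ξ : E), ξ ≠ 0 →
      ENNReal.ofReal (1 - Real.cos (inner ℝ ξ x : ℝ)) * (ENNReal.ofReal (‖ξ‖ ^ p))⁻¹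
        ≤ ENNReal.ofReal (‖x‖^2/2) * ENNReal.ofReal (‖ξ‖ ^ ((2 - I₀) - n)) := by
    intro x ξ hξ
    have hξpos : 0 < ‖ξ‖ := norm_pos_iff.2 hξ
    have h1 : 1 - Real.cos (inner ℝ ξ x : ℝ) ≤ ‖x‖^2/2 * ‖ξ‖^2 := by
      have h2 := one_sub_cos_le_sq (inner ℝ ξ x : ℝ)
      have h3 : |(inner ℝ ξ x : ℝ)| ≤ ‖ξ‖ * ‖x‖ := abs_real_inner_le_norm ξ x
      have h4 : (inner ℝ ξ x : ℝ)^2 ≤ (‖ξ‖ * ‖x‖)^2 := by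
        nlinarith [_root_.abs_nonneg (inner ℝ ξ x : ℝ), _root_.sq_abs (inner ℝ ξ x : ℝ)]
      nlinarith
    have h5 : ENNReal.ofReal (‖ξ‖ ^ ((2 - I₀) - n)) =
        ENNReal.ofReal (‖ξ‖^2) * (ENNReal.ofReal (‖ξ‖ ^ p))⁻¹ := by
      have e1 : ‖ξ‖ ^ ((2 - I₀) - n) = ‖ξ‖^(2:ℝ) * (‖ξ‖ ^ p)⁻¹ := by
        rw [← Real.rpow_neg hξpos.le, ← Real.rpow_add hξpos]
        congr 1
        rw [hpdef]; ring
      rw [e1, ENNReal.ofReal_mul (by positivity), ENNReal.ofReal_inv_of_pos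
        (Real.rpow_pos_of_pos hξpos p)]
      congr 2
      rw [show (2:ℝ) = ((2:ℕ):ℝ) by norm_num, Real.rpow_natCast]
    rw [h5, ← mul_assoc, ← ENNReal.ofReal_mul (by positivity)]
    exact mul_le_mul' (ENNReal.ofReal_le_ofReal h1) le_rfl
  have hpt2 : ∀ (x ξ : E), ξ ≠ 0 →
      ENNReal.ofReal (1 - Real.cos (inner ℝ ξ x : ℝ)) * (ENNReal.ofReal (‖ξ‖ ^ p))⁻¹
        ≤ ENNReal.ofReal 2 * ENNReal.ofReal (‖ξ‖ ^ (-(n:ℝ) - I₀)) := by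
    intro x ξ hξ
    have hξpos : 0 < ‖ξ‖ := norm_pos_iff.2 hξ
    have h5 : ENNReal.ofReal (‖ξ‖ ^ (-(n:ℝ) - I₀)) = (ENNReal.ofReal (‖ξ‖ ^ p))⁻¹ := by
      rw [show -(n:ℝ) - I₀ = -p by rw [hpdef]; ring, Real.rpow_neg hξpos.le,
        ENNReal.ofReal_inv_of_pos (Real.rpow_pos_of_pos hξpos p)]
    rw [h5]
    exact mul_le_mul' (ENNReal.ofReal_le_ofReal (one_sub_cos_le_two _)) le_rfl
  -- measurability of the bounding functions
  have hmeas1 : Measurable fun ξ : E => ENNReal.ofReal (‖ξ‖ ^ ((2 - I₀) - n)) :=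
    (measurable_norm.pow measurable_const).ennreal_ofReal
  have hmeas2 : Measurable fun ξ : E => ENNReal.ofReal (‖ξ‖ ^ (-(n:ℝ) - I₀)) :=
    (measurable_norm.pow measurable_const).ennreal_ofReal
  have hae : ∀ᵐ ξ : E ∂volume, ξ ≠ 0 := by
    rw [ae_iff]
    have : {ξ : E | ¬ ξ ≠ 0} = {0} := by ext ξ; simp
    rw [this]
    exact measure_singleton 0
  refine ⟨CA + 2 * CB, by finiteness, ?_⟩
  intro x
  constructor
  · -- small x
    intro hx
    calc (∫⁻ ξ in closedBall (0:E) 1, ENNReal.ofReal (1 - Real.cos (inner ℝ ξ x : ℝ)) *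
          (ENNReal.ofReal (‖ξ‖ ^ p))⁻¹)
        ≤ ∫⁻ ξ in closedBall (0:E) 1,
            ENNReal.ofReal (‖x‖^2/2) * ENNReal.ofReal (‖ξ‖ ^ ((2 - I₀) - n)) := by
          apply lintegral_mono_ae
          filter_upwards [ae_restrict_of_ae hae] with ξ hξ
          exact hpt1 x ξ hξ
      _ = ENNReal.ofReal (‖x‖^2/2) *
            ∫⁻ ξ in closedBall (0:E) 1, ENNReal.ofReal (‖ξ‖ ^ ((2 - I₀) - n)) :=
          lintegral_const_mul _ hmeas1
      _ ≤ ENNReal.ofReal (‖x‖^2/2) * (CA * ENNReal.ofReal ((1:ℝ) ^ (2 - I₀))) := by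
          gcongr
          exact hCA 1 one_pos
      _ ≤ (CA + 2 * CB) * ENNReal.ofReal (min 1 (‖x‖^2)) := by
          rw [Real.one_rpow, ENNReal.ofReal_one, mul_one]
          have h1 : ENNReal.ofReal (‖x‖^2/2) ≤ ENNReal.ofReal (min 1 (‖x‖^2)) := by
            apply ENNReal.ofReal_le_ofReal
            apply le_min
            · nlinarith [norm_nonneg x]
            · nlinarith [norm_nonneg x]
          calc ENNReal.ofReal (‖x‖^2/2) * CA ≤ ENNReal.ofReal (min 1 (‖x‖^2)) * CA :=
                mul_le_mul' h1 le_rfl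
            _ ≤ (CA + 2*CB) * ENNReal.ofReal (min 1 (‖x‖^2)) := by
                rw [mul_comm]
                exact mul_le_mul' le_self_add le_rfl
  · -- large x
    intro hx
    have hR0 : (0:ℝ) < ‖x‖ := lt_of_lt_of_le one_pos hx
    have hsplit : closedBall (0:E) 1 ⊆ closedBall (0:E) ‖x‖⁻¹ ∪ {ξ : E | ‖x‖⁻¹ < ‖ξ‖} := by
      intro ξ _
      rcases le_or_gt ‖ξ‖ ‖x‖⁻¹ with h | h
      · exact Or.inl (mem_closedBall_zero_iff.2 h)
      · exact Or.inr h
    calc (∫⁻ ξ in closedBall (0:E) 1, ENNReal.ofReal (1 - Real.cos (inner ℝ ξ x : ℝ)) *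
          (ENNReal.ofReal (‖ξ‖ ^ p))⁻¹)
        ≤ ∫⁻ ξ in closedBall (0:E) ‖x‖⁻¹ ∪ {ξ : E | ‖x‖⁻¹ < ‖ξ‖},
            ENNReal.ofReal (1 - Real.cos (inner ℝ ξ x : ℝ)) * (ENNReal.ofReal (‖ξ‖ ^ p))⁻¹ :=
          lintegral_mono_set hsplit
      _ ≤ (∫⁻ ξ in closedBall (0:E) ‖x‖⁻¹,
            ENNReal.ofReal (1 - Real.cos (inner ℝ ξ x : ℝ)) * (ENNReal.ofReal (‖ξ‖ ^ p))⁻¹)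
          + ∫⁻ ξ in {ξ : E | ‖x‖⁻¹ < ‖ξ‖},
            ENNReal.ofReal (1 - Real.cos (inner ℝ ξ x : ℝ)) * (ENNReal.ofReal (‖ξ‖ ^ p))⁻¹ :=
          lintegral_union_le _ _ _
      _ ≤ CA * ENNReal.ofReal (‖x‖ ^ I₀) + 2 * CB * ENNReal.ofReal (‖x‖ ^ I₀) := by
          gcongr
          · -- ball part
            calc (∫⁻ ξ in closedBall (0:E) ‖x‖⁻¹,
                  ENNReal.ofReal (1 - Real.cos (inner ℝ ξ x : ℝ)) * (ENNReal.ofReal (‖ξ‖ ^ p))⁻¹)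
                ≤ ∫⁻ ξ in closedBall (0:E) ‖x‖⁻¹,
                    ENNReal.ofReal (‖x‖^2/2) * ENNReal.ofReal (‖ξ‖ ^ ((2 - I₀) - n)) := by
                  apply lintegral_mono_ae
                  filter_upwards [ae_restrict_of_ae hae] with ξ hξ
                  exact hpt1 x ξ hξ
              _ = ENNReal.ofReal (‖x‖^2/2) *
                    ∫⁻ ξ in closedBall (0:E) ‖x‖⁻¹, ENNReal.ofReal (‖ξ‖ ^ ((2 - I₀) - n)) :=
                  lintegral_const_mul _ hmeas1
              _ ≤ ENNReal.ofReal (‖x‖^2/2) * (CA * ENNReal.ofReal ((‖x‖⁻¹) ^ (2 - I₀))) := by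
                  gcongr
                  exact hCA _ (by positivity)
              _ = CA * (ENNReal.ofReal (‖x‖^2/2) * ENNReal.ofReal ((‖x‖⁻¹) ^ (2 - I₀))) := by
                  ring
              _ ≤ CA * ENNReal.ofReal (‖x‖ ^ I₀) := by
                  gcongr
                  rw [← ENNReal.ofReal_mul (by positivity)]
                  apply ENNReal.ofReal_le_ofReal
                  have e1 : (‖x‖⁻¹) ^ (2 - I₀) = ‖x‖ ^ (I₀ - 2) := by
                    rw [Real.inv_rpow hR0.le, ← Real.rpow_neg hR0.le]
                    congr 1; ring
                  have e2 : ‖x‖^2 = ‖x‖ ^ ((2:ℕ):ℝ) := (Real.rpow_natCast _ 2).symm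
                  have e3 : ‖x‖^2/2 * (‖x‖⁻¹)^(2-I₀) = ‖x‖ ^ I₀ / 2 := by
                    rw [e1, e2, div_mul_eq_mul_div, ← Real.rpow_add hR0]
                    norm_num
                  rw [e3]
                  have := Real.rpow_nonneg (norm_nonneg x) I₀
                  linarith
          · -- outside part
            calc (∫⁻ ξ in {ξ : E | ‖x‖⁻¹ < ‖ξ‖},
                  ENNReal.ofReal (1 - Real.cos (inner ℝ ξ x : ℝ)) * (ENNReal.ofReal (‖ξ‖ ^ p))⁻¹)
                ≤ ∫⁻ ξ in {ξ : E | ‖x‖⁻¹ < ‖ξ‖},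
                    ENNReal.ofReal 2 * ENNReal.ofReal (‖ξ‖ ^ (-(n:ℝ) - I₀)) := by
                  apply lintegral_mono_ae
                  filter_upwards [ae_restrict_of_ae hae] with ξ hξ
                  exact hpt2 x ξ hξ
              _ = ENNReal.ofReal 2 *
                    ∫⁻ ξ in {ξ : E | ‖x‖⁻¹ < ‖ξ‖}, ENNReal.ofReal (‖ξ‖ ^ (-(n:ℝ) - I₀)) :=
                  lintegral_const_mul _ hmeas2
              _ ≤ ENNReal.ofReal 2 * (CB * ENNReal.ofReal ((‖x‖⁻¹) ^ (-I₀))) := by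
                  gcongr
                  exact hCB _ (by positivity)
              _ = 2 * CB * ENNReal.ofReal ((‖x‖⁻¹) ^ (-I₀)) := by
                  rw [ENNReal.ofReal_ofNat]
                  ring
              _ = 2 * CB * ENNReal.ofReal (‖x‖ ^ I₀) := by
                  congr 2
                  rw [Real.inv_rpow hR0.le, ← Real.rpow_neg hR0.le, neg_neg]
      _ = (CA + 2 * CB) * ENNReal.ofReal (‖x‖ ^ I₀) := by ring

lemma integrable_nonneg_iff {α : Type*} [MeasurableSpace α] {μ : Measure α} {f : α → ℝ}
    (hm : AEStronglyMeasurable f μ) (h0 : ∀ a, 0 ≤ f a) :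
    Integrable f μ ↔ ∫⁻ a, ENNReal.ofReal (f a) ∂μ < ∞ := by
  constructor
  · rintro ⟨_, h⟩
    rwa [hasFiniteIntegral_iff_ofReal (Filter.Eventually.of_forall h0)] at h
  · intro h
    exact ⟨hm, (hasFiniteIntegral_iff_ofReal (Filter.Eventually.of_forall h0)).2 h⟩

lemma levy_min_lintegral {ν : Measure E} (hν : Integrable (fun x : E => min 1 (‖x‖^2)) ν) :
    ∫⁻ x, ENNReal.ofReal (min 1 (‖x‖^2)) ∂ν < ∞ :=
  (integrable_nonneg_iff hν.aestronglyMeasurable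
    (fun x => le_min zero_le_one (sq_nonneg _))).1 hν

lemma levy_tail {ν : Measure E} (hν : Integrable (fun x : E => min 1 (‖x‖^2)) ν)
    {c : ℝ} (hc0 : 0 < c) (hc1 : c ≤ 1) : ν {x : E | c < ‖x‖} < ∞ := by
  have hmin : ∀ x : E, x ∈ {x : E | c < ‖x‖} →
      ENNReal.ofReal (c^2) ≤ ENNReal.ofReal (min 1 (‖x‖^2)) := by
    intro x hx
    have hx' : c < ‖x‖ := hx
    apply ENNReal.ofReal_le_ofReal
    apply le_min <;> nlinarith
  have hmark : ENNReal.ofReal (c^2) * ν {x : E | c < ‖x‖}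
      ≤ ∫⁻ x, ENNReal.ofReal (min 1 (‖x‖^2)) ∂ν := by
    calc ENNReal.ofReal (c^2) * ν {x : E | c < ‖x‖}
        = ∫⁻ _ in {x : E | c < ‖x‖}, ENNReal.ofReal (c^2) ∂ν := (setLIntegral_const _ _).symm
      _ ≤ ∫⁻ x in {x : E | c < ‖x‖}, ENNReal.ofReal (min 1 (‖x‖^2)) ∂ν :=
          setLIntegral_mono' (measurableSet_lt measurable_const measurable_norm) hmin
      _ ≤ ∫⁻ x, ENNReal.ofReal (min 1 (‖x‖^2)) ∂ν := setLIntegral_le_lintegral _ _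
  have hc2 : ENNReal.ofReal (c^2) ≠ 0 := by
    simp only [ne_eq, ENNReal.ofReal_eq_zero, not_le]
    nlinarith
  by_contra hcon
  push_neg at hcon
  rw [top_le_iff.1 hcon, ENNReal.mul_top hc2] at hmark
  exact absurd (levy_min_lintegral hν) (not_lt.2 hmark)

lemma levy_sigmaFinite {ν : Measure E}
    (hν0 : ν ({0} : Set E) = 0) (hν : Integrable (fun x : E => min 1 (‖x‖^2)) ν) :
    SigmaFinite ν := by
  apply Measure.FiniteSpanningSetsIn.sigmaFinite (C := Set.univ)
  exact
    { set := fun k => {x : E | ((k:ℝ)+1)⁻¹ < ‖x‖} ∪ {0}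
      set_mem := fun _ => mem_univ _
      finite := fun k => by
        have h1 : (0:ℝ) < ((k:ℝ)+1)⁻¹ := by positivity
        have h2 : ((k:ℝ)+1)⁻¹ ≤ 1 := by
          rw [inv_le_one_iff₀]; right; linarith [Nat.cast_nonneg (α := ℝ) k]
        calc ν ({x : E | ((k:ℝ)+1)⁻¹ < ‖x‖} ∪ {0})
            ≤ ν {x : E | ((k:ℝ)+1)⁻¹ < ‖x‖} + ν {0} := measure_union_le _ _
          _ = ν {x : E | ((k:ℝ)+1)⁻¹ < ‖x‖} := by rw [hν0, add_zero]
          _ < ∞ := levy_tail hν h1 h2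
      spanning := by
        apply eq_univ_of_forall
        intro x
        rcases eq_or_ne x 0 with h | h
        · exact mem_iUnion.2 ⟨0, Or.inr (by simp [h])⟩
        · have hx : 0 < ‖x‖ := norm_pos_iff.2 h
          obtain ⟨k, hk⟩ := exists_nat_gt ‖x‖⁻¹
          refine mem_iUnion.2 ⟨k, Or.inl ?_⟩
          have h1 : ‖x‖⁻¹ < (k:ℝ) + 1 := by linarith
          exact inv_lt_of_inv_lt₀ hx h1 }

lemma gaussian_bound (A : Matrix (Fin n) (Fin n) ℝ) (ξ : E) :
    dotProduct (fun i => ξ i) (A.mulVec fun i => ξ i)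
      ≤ (∑ i, ∑ j, |A i j|) * ‖ξ‖^2 := by
  have hcoord : ∀ i, |ξ i| ≤ ‖ξ‖ := fun i => by
    rw [EuclideanSpace.norm_eq, ← Real.sqrt_sq_eq_abs]
    apply Real.sqrt_le_sqrt
    simpa [Real.norm_eq_abs, _root_.sq_abs] using
      Finset.single_le_sum (fun j _ => sq_nonneg (‖ξ j‖)) (Finset.mem_univ i)
  have h1 : dotProduct (fun i => ξ i) (A.mulVec fun i => ξ i)
      = ∑ i, ξ i * ∑ j, A i j * ξ j := by simp [dotProduct, Matrix.mulVec]
  rw [h1, Finset.sum_mul]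
  apply Finset.sum_le_sum
  intro i _
  rw [Finset.mul_sum, Finset.sum_mul]
  apply Finset.sum_le_sum
  intro j _
  calc ξ i * (A i j * ξ j) ≤ |ξ i * (A i j * ξ j)| := le_abs_self _
    _ = |A i j| * (|ξ i| * |ξ j|) := by rw [_root_.abs_mul, _root_.abs_mul]; ring
    _ ≤ |A i j| * (‖ξ‖ * ‖ξ‖) := by
        apply mul_le_mul_of_nonneg_left _ (_root_.abs_nonneg _)
        exact mul_le_mul (hcoord i) (hcoord j) (_root_.abs_nonneg _) (norm_nonneg _)
    _ = |A i j| * ‖ξ‖^2 := by ring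

lemma gaussian_measurable (A : Matrix (Fin n) (Fin n) ℝ) :
    Measurable (fun ξ : E => dotProduct (fun i => ξ i) (A.mulVec fun i => ξ i)) := by
  have h1 : (fun ξ : E => dotProduct (fun i => ξ i) (A.mulVec fun i => ξ i))
      = fun ξ : E => ∑ i, ξ i * ∑ j, A i j * ξ j := by
    funext ξ; simp [dotProduct, Matrix.mulVec]
  rw [h1]
  apply Finset.measurable_sum
  intro i _
  exact (by fun_prop : Measurable fun ξ : E => ξ i).mul
    (Finset.measurable_sum _ fun j _ => measurable_const.mul (by fun_prop : Measurable fun ξ : E => ξ j))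

end LKAux

open LKAux

/-- The real part of a Lévy–Khintchine exponent with Gaussian part `A` and Lévy measure `ν`. -/
def LKRePsi (n : ℕ) (A : Matrix (Fin n) (Fin n) ℝ)
    (ν : Measure (EuclideanSpace ℝ (Fin n))) (ξ : EuclideanSpace ℝ (Fin n)) : ℝ :=
  (1 / 2 : ℝ) * dotProduct (fun i => ξ i) (A.mulVec fun i => ξ i)
    + ∫ x, (1 - Real.cos (inner ℝ ξ x : ℝ)) ∂ν

set_option maxHeartbeats 4000000

theorem stmt5 (n : ℕ) (ν : Measure (EuclideanSpace ℝ (Fin n)))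
    (hν0 : ν ({0} : Set (EuclideanSpace ℝ (Fin n))) = 0)
    (hν : Integrable (fun x : EuclideanSpace ℝ (Fin n) => min 1 (‖x‖ ^ 2)) ν)
    (A : Matrix (Fin n) (Fin n) ℝ) (hAsymm : A.IsSymm) (hApsd : A.PosSemidef)
    (I₀ : ℝ) (hI₀ : I₀ ∈ Set.Ioo (0 : ℝ) 1) :
    IntegrableOn (fun x : EuclideanSpace ℝ (Fin n) => ‖x‖ ^ I₀)
        {x : EuclideanSpace ℝ (Fin n) | 1 < ‖x‖} ν ↔
      IntegrableOn (fun ξ : EuclideanSpace ℝ (Fin n) => LKRePsi n A ν ξ / ‖ξ‖ ^ ((n : ℝ) + I₀))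
        {ξ : EuclideanSpace ℝ (Fin n) | ‖ξ‖ ≤ 1} := by
  obtain ⟨hI₀0, hI₀1⟩ := hI₀
  rcases Nat.eq_zero_or_pos n with hn0 | hn
  · -- trivial zero-dimensional case
    subst hn0
    have hzero : ∀ ξ : EuclideanSpace ℝ (Fin 0), LKRePsi 0 A ν ξ = 0 := by
      intro ξ
      have h1 : dotProduct (fun i => ξ i) (A.mulVec fun i => ξ i) = 0 := by
        simp [dotProduct]
      have h2 : ∀ x : EuclideanSpace ℝ (Fin 0), (1:ℝ) - Real.cos (inner ℝ ξ x : ℝ) = 0 := by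
        intro x
        have h3 : (inner ℝ ξ x : ℝ) = 0 := by simp [PiLp.inner_apply]
        rw [h3, Real.cos_zero]; ring
      show (1 / 2 : ℝ) * dotProduct (fun i => ξ i) (A.mulVec fun i => ξ i)
        + ∫ x, (1 - Real.cos (inner ℝ ξ x : ℝ)) ∂ν = 0
      rw [h1]
      have h4 : (fun x : EuclideanSpace ℝ (Fin 0) => (1:ℝ) - Real.cos (inner ℝ ξ x : ℝ))
          = fun _ => (0:ℝ) := funext h2
      rw [h4]
      simp
    constructor
    · intro _
      have hfun : (fun ξ : EuclideanSpace ℝ (Fin 0) =>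
          LKRePsi 0 A ν ξ / ‖ξ‖ ^ (((0:ℕ):ℝ) + I₀)) = fun _ => (0:ℝ) := by
        funext ξ
        rw [hzero ξ, zero_div]
      rw [hfun]
      exact integrableOn_zero
    · intro _
      have hempty : {x : EuclideanSpace ℝ (Fin 0) | 1 < ‖x‖} = ∅ := by
        apply eq_empty_iff_forall_notMem.2
        intro x hx
        have hx0 : x = 0 := Subsingleton.elim x 0
        rw [hx0] at hx
        simp at hx
        linarith [hx]
      rw [hempty]
      exact integrableOn_empty
  -- main case : n ≥ 1
  haveI : Nonempty (Fin n) := ⟨⟨0, hn⟩⟩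
  haveI hσ : SigmaFinite ν := levy_sigmaFinite hν0 hν
  have hppos : (0:ℝ) < (n:ℝ) + I₀ := by positivity
  have hBset : {ξ : EuclideanSpace ℝ (Fin n) | ‖ξ‖ ≤ 1}
      = closedBall (0 : EuclideanSpace ℝ (Fin n)) 1 :=
    Set.ext fun ξ => mem_closedBall_zero_iff.symm
  have hSmeas : MeasurableSet {x : EuclideanSpace ℝ (Fin n) | 1 < ‖x‖} :=
    measurableSet_lt measurable_const measurable_norm
  have hae : ∀ᵐ ξ : EuclideanSpace ℝ (Fin n) ∂volume, ξ ≠ 0 := by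
    rw [ae_iff]
    have h : {ξ : EuclideanSpace ℝ (Fin n) | ¬ ξ ≠ 0} = {0} := by ext ξ; simp
    rw [h]
    exact measure_singleton 0
  have h1cos0 : ∀ t : ℝ, 0 ≤ 1 - Real.cos t := one_sub_cos_nonneg
  have hq0 : ∀ ξ : EuclideanSpace ℝ (Fin n),
      0 ≤ (1/2 : ℝ) * dotProduct (fun i => ξ i) (A.mulVec fun i => ξ i) := by
    intro ξ
    have h := hApsd.dotProduct_mulVec_nonneg (fun i => ξ i)
    have h2 : 0 ≤ dotProduct (fun i => ξ i) (A.mulVec fun i => ξ i) := by simpa using h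
    linarith
  have hbound : ∀ ξ x : EuclideanSpace ℝ (Fin n),
      1 - Real.cos (inner ℝ ξ x : ℝ) ≤ (2 + ‖ξ‖^2) * min 1 (‖x‖^2) := by
    intro ξ x
    have h3 : |(inner ℝ ξ x : ℝ)| ≤ ‖ξ‖ * ‖x‖ := abs_real_inner_le_norm ξ x
    have h4 : (inner ℝ ξ x : ℝ)^2 ≤ (‖ξ‖ * ‖x‖)^2 := by
      nlinarith [_root_.abs_nonneg (inner ℝ ξ x : ℝ), _root_.sq_abs (inner ℝ ξ x : ℝ)]
    rcases le_or_gt ‖x‖ 1 with hx | hx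
    · have hmin : min 1 (‖x‖^2) = ‖x‖^2 := min_eq_right (by nlinarith [norm_nonneg x])
      have h5 := one_sub_cos_le_sq (inner ℝ ξ x : ℝ)
      rw [hmin]
      nlinarith [sq_nonneg ‖ξ‖, sq_nonneg ‖x‖, sq_nonneg (‖ξ‖*‖x‖)]
    · have hmin : min 1 (‖x‖^2) = 1 := min_eq_left (by nlinarith)
      have h5 := one_sub_cos_le_two (inner ℝ ξ x : ℝ)
      rw [hmin]
      nlinarith [sq_nonneg ‖ξ‖]
  have hInt : ∀ ξ : EuclideanSpace ℝ (Fin n),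
      Integrable (fun x => 1 - Real.cos (inner ℝ ξ x : ℝ)) ν := by
    intro ξ
    apply Integrable.mono' (hν.const_mul (2 + ‖ξ‖^2))
    · exact (continuous_const.sub (Real.continuous_cos.comp
        (Continuous.inner continuous_const continuous_id))).aestronglyMeasurable
    · apply Filter.Eventually.of_forall
      intro x
      rw [Real.norm_of_nonneg (h1cos0 _)]
      exact hbound ξ x
  have hg0 : ∀ ξ : EuclideanSpace ℝ (Fin n),
      0 ≤ ∫ x, (1 - Real.cos (inner ℝ ξ x : ℝ)) ∂ν :=
    fun ξ => integral_nonneg fun x => h1cos0 _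
  have hgof : ∀ ξ : EuclideanSpace ℝ (Fin n),
      ENNReal.ofReal (∫ x, (1 - Real.cos (inner ℝ ξ x : ℝ)) ∂ν)
        = ∫⁻ x, ENNReal.ofReal (1 - Real.cos (inner ℝ ξ x : ℝ)) ∂ν :=
    fun ξ => ofReal_integral_eq_lintegral_ofReal (hInt ξ)
      (Filter.Eventually.of_forall fun x => h1cos0 _)
  have hgsm : StronglyMeasurable fun ξ : EuclideanSpace ℝ (Fin n) =>
      ∫ x, (1 - Real.cos (inner ℝ ξ x : ℝ)) ∂ν :=
    (Continuous.stronglyMeasurable (continuous_const.sub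
      (Real.continuous_cos.comp continuous_inner))).integral_prod_right'
  have hLKeq : ∀ ξ : EuclideanSpace ℝ (Fin n), LKRePsi n A ν ξ
      = (1/2 : ℝ) * dotProduct (fun i => ξ i) (A.mulVec fun i => ξ i)
        + ∫ x, (1 - Real.cos (inner ℝ ξ x : ℝ)) ∂ν := fun _ => rfl
  have hLK0 : ∀ ξ : EuclideanSpace ℝ (Fin n), 0 ≤ LKRePsi n A ν ξ := by
    intro ξ
    rw [hLKeq ξ]
    exact add_nonneg (hq0 ξ) (hg0 ξ)
  have hqmeas : Measurable fun ξ : EuclideanSpace ℝ (Fin n) =>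
      (1/2 : ℝ) * dotProduct (fun i => ξ i) (A.mulVec fun i => ξ i) :=
    (gaussian_measurable A).const_mul _
  have hLKmeas : Measurable fun ξ : EuclideanSpace ℝ (Fin n) =>
      LKRePsi n A ν ξ / ‖ξ‖ ^ ((n:ℝ) + I₀) := by
    have h1 : (fun ξ : EuclideanSpace ℝ (Fin n) => LKRePsi n A ν ξ)
        = fun ξ => (1/2 : ℝ) * dotProduct (fun i => ξ i) (A.mulVec fun i => ξ i)
            + ∫ x, (1 - Real.cos (inner ℝ ξ x : ℝ)) ∂ν := rfl
    exact ((h1 ▸ (hqmeas.add hgsm.measurable)) :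
      Measurable fun ξ : EuclideanSpace ℝ (Fin n) => LKRePsi n A ν ξ).div
      (measurable_norm.pow measurable_const)
  have hLHSiff : IntegrableOn (fun x : EuclideanSpace ℝ (Fin n) => ‖x‖ ^ I₀)
      {x : EuclideanSpace ℝ (Fin n) | 1 < ‖x‖} ν
      ↔ ∫⁻ x in {x : EuclideanSpace ℝ (Fin n) | 1 < ‖x‖},
          ENNReal.ofReal (‖x‖ ^ I₀) ∂ν < ∞ :=
    integrable_nonneg_iff ((measurable_norm.pow measurable_const).aestronglyMeasurable)
      (fun x => Real.rpow_nonneg (norm_nonneg x) I₀)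
  have hRHSiff : IntegrableOn
      (fun ξ : EuclideanSpace ℝ (Fin n) => LKRePsi n A ν ξ / ‖ξ‖ ^ ((n:ℝ) + I₀))
      (closedBall (0 : EuclideanSpace ℝ (Fin n)) 1)
      ↔ ∫⁻ ξ in closedBall (0 : EuclideanSpace ℝ (Fin n)) 1,
          ENNReal.ofReal (LKRePsi n A ν ξ / ‖ξ‖ ^ ((n:ℝ) + I₀)) < ∞ :=
    integrable_nonneg_iff (hLKmeas.aestronglyMeasurable)
      (fun ξ => div_nonneg (hLK0 ξ) (Real.rpow_nonneg (norm_nonneg ξ) _))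
  have hcne : ∀ ξ : EuclideanSpace ℝ (Fin n), ξ ≠ 0 →
      (ENNReal.ofReal (‖ξ‖ ^ ((n:ℝ) + I₀)))⁻¹ ≠ ⊤ := by
    intro ξ hξ
    rw [ne_eq, ENNReal.inv_eq_top, ENNReal.ofReal_eq_zero, not_le]
    exact Real.rpow_pos_of_pos (norm_pos_iff.2 hξ) _
  have hFmeas : Measurable (Function.uncurry fun ξ x : EuclideanSpace ℝ (Fin n) =>
      ENNReal.ofReal (1 - Real.cos (inner ℝ ξ x : ℝ))
        * (ENNReal.ofReal (‖ξ‖ ^ ((n:ℝ) + I₀)))⁻¹) := by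
    have h1 : Measurable fun q : EuclideanSpace ℝ (Fin n) × EuclideanSpace ℝ (Fin n) =>
        ENNReal.ofReal (1 - Real.cos (inner ℝ q.1 q.2 : ℝ))
          * (ENNReal.ofReal (‖q.1‖ ^ ((n:ℝ) + I₀)))⁻¹ :=
      ((continuous_const.sub (Real.continuous_cos.comp
        continuous_inner)).measurable.ennreal_ofReal).mul
        ((measurable_fst.norm.pow measurable_const).ennreal_ofReal.inv)
    exact h1
  -- decomposition of the RHS integral
  have hdecomp : ∫⁻ ξ in closedBall (0 : EuclideanSpace ℝ (Fin n)) 1,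
      ENNReal.ofReal (LKRePsi n A ν ξ / ‖ξ‖ ^ ((n:ℝ) + I₀))
      = (∫⁻ ξ in closedBall (0 : EuclideanSpace ℝ (Fin n)) 1,
          ENNReal.ofReal (((1/2 : ℝ)
            * dotProduct (fun i => ξ i) (A.mulVec fun i => ξ i))
            / ‖ξ‖ ^ ((n:ℝ) + I₀)))
        + ∫⁻ x, (∫⁻ ξ in closedBall (0 : EuclideanSpace ℝ (Fin n)) 1,
            ENNReal.ofReal (1 - Real.cos (inner ℝ ξ x : ℝ))
              * (ENNReal.ofReal (‖ξ‖ ^ ((n:ℝ) + I₀)))⁻¹) ∂ν := by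
    have hsplit : ∀ ξ : EuclideanSpace ℝ (Fin n),
        ENNReal.ofReal (LKRePsi n A ν ξ / ‖ξ‖ ^ ((n:ℝ) + I₀))
          = ENNReal.ofReal (((1/2 : ℝ)
              * dotProduct (fun i => ξ i) (A.mulVec fun i => ξ i))
              / ‖ξ‖ ^ ((n:ℝ) + I₀))
            + ENNReal.ofReal ((∫ x, (1 - Real.cos (inner ℝ ξ x : ℝ)) ∂ν)
              / ‖ξ‖ ^ ((n:ℝ) + I₀)) := by
      intro ξ
      rw [hLKeq ξ, add_div, ENNReal.ofReal_add
        (div_nonneg (hq0 ξ) (Real.rpow_nonneg (norm_nonneg ξ) _))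
        (div_nonneg (hg0 ξ) (Real.rpow_nonneg (norm_nonneg ξ) _))]
    rw [lintegral_congr hsplit, lintegral_add_left
      (f := fun ξ : EuclideanSpace ℝ (Fin n) => ENNReal.ofReal (((1/2 : ℝ)
          * dotProduct (fun i => ξ i) (A.mulVec fun i => ξ i)) / ‖ξ‖ ^ ((n:ℝ) + I₀)))
      ((hqmeas.div (measurable_norm.pow measurable_const)).ennreal_ofReal)]
    congr 1
    calc ∫⁻ ξ in closedBall (0 : EuclideanSpace ℝ (Fin n)) 1,
        ENNReal.ofReal ((∫ x, (1 - Real.cos (inner ℝ ξ x : ℝ)) ∂ν) / ‖ξ‖ ^ ((n:ℝ) + I₀))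
        = ∫⁻ ξ in closedBall (0 : EuclideanSpace ℝ (Fin n)) 1,
            ∫⁻ x, ENNReal.ofReal (1 - Real.cos (inner ℝ ξ x : ℝ))
              * (ENNReal.ofReal (‖ξ‖ ^ ((n:ℝ) + I₀)))⁻¹ ∂ν := by
          apply lintegral_congr_ae
          filter_upwards [ae_restrict_of_ae hae] with ξ hξ
          rw [ENNReal.ofReal_div_of_pos (Real.rpow_pos_of_pos (norm_pos_iff.2 hξ) _),
            hgof ξ, ENNReal.div_eq_inv_mul, mul_comm,
            ← lintegral_mul_const' _ _ (hcne ξ hξ)]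
      _ = ∫⁻ x, (∫⁻ ξ in closedBall (0 : EuclideanSpace ℝ (Fin n)) 1,
            ENNReal.ofReal (1 - Real.cos (inner ℝ ξ x : ℝ))
              * (ENNReal.ofReal (‖ξ‖ ^ ((n:ℝ) + I₀)))⁻¹) ∂ν :=
          lintegral_lintegral_swap hFmeas.aemeasurable
  -- finiteness of the Gaussian part
  have hqfin : (∫⁻ ξ in closedBall (0 : EuclideanSpace ℝ (Fin n)) 1,
      ENNReal.ofReal (((1/2 : ℝ)
        * dotProduct (fun i => ξ i) (A.mulVec fun i => ξ i))
        / ‖ξ‖ ^ ((n:ℝ) + I₀))) < ∞ := by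
    obtain ⟨CQ, hCQne, hCQ⟩ := lintegral_ball_rpow_le (n := n) hn (s := 2 - I₀) (by linarith)
    have hptq : ∀ ξ : EuclideanSpace ℝ (Fin n), ξ ≠ 0 →
        ENNReal.ofReal (((1/2 : ℝ)
          * dotProduct (fun i => ξ i) (A.mulVec fun i => ξ i))
          / ‖ξ‖ ^ ((n:ℝ) + I₀))
        ≤ ENNReal.ofReal ((1/2 : ℝ) * ∑ i, ∑ j, |A i j|)
            * ENNReal.ofReal (‖ξ‖ ^ ((2 - I₀) - n)) := by
      intro ξ hξ
      have hξpos : 0 < ‖ξ‖ := norm_pos_iff.2 hξ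
      have hd : 0 < ‖ξ‖ ^ ((n:ℝ) + I₀) := Real.rpow_pos_of_pos hξpos _
      rw [← ENNReal.ofReal_mul (by positivity)]
      apply ENNReal.ofReal_le_ofReal
      have e1 : ‖ξ‖ ^ ((2 - I₀) - n) = ‖ξ‖^2 / ‖ξ‖ ^ ((n:ℝ) + I₀) := by
        rw [eq_div_iff hd.ne', ← Real.rpow_add hξpos]
        rw [show ((2 - I₀) - n) + ((n:ℝ) + I₀) = ((2:ℕ):ℝ) by push_cast; ring,
          Real.rpow_natCast]
      rw [e1, mul_div_assoc', div_le_div_iff_of_pos_right hd]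
      have h2 := gaussian_bound A ξ
      nlinarith [sq_nonneg ‖ξ‖]
    calc (∫⁻ ξ in closedBall (0 : EuclideanSpace ℝ (Fin n)) 1,
        ENNReal.ofReal (((1/2 : ℝ)
          * dotProduct (fun i => ξ i) (A.mulVec fun i => ξ i))
          / ‖ξ‖ ^ ((n:ℝ) + I₀)))
        ≤ ∫⁻ ξ in closedBall (0 : EuclideanSpace ℝ (Fin n)) 1,
            ENNReal.ofReal ((1/2 : ℝ) * ∑ i, ∑ j, |A i j|)
              * ENNReal.ofReal (‖ξ‖ ^ ((2 - I₀) - n)) := by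
          apply lintegral_mono_ae
          filter_upwards [ae_restrict_of_ae hae] with ξ hξ
          exact hptq ξ hξ
      _ = ENNReal.ofReal ((1/2 : ℝ) * ∑ i, ∑ j, |A i j|)
            * ∫⁻ ξ in closedBall (0 : EuclideanSpace ℝ (Fin n)) 1,
              ENNReal.ofReal (‖ξ‖ ^ ((2 - I₀) - n)) :=
          lintegral_const_mul _ ((measurable_norm.pow measurable_const).ennreal_ofReal)
      _ ≤ ENNReal.ofReal ((1/2 : ℝ) * ∑ i, ∑ j, |A i j|)
            * (CQ * ENNReal.ofReal ((1:ℝ) ^ (2 - I₀))) := by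
          gcongr
          exact hCQ 1 one_pos
      _ < ∞ := by
          rw [Real.one_rpow, ENNReal.ofReal_one, mul_one]
          exact ENNReal.mul_lt_top ENNReal.ofReal_lt_top hCQne.lt_top
  -- final equivalence
  rw [hBset, hLHSiff, hRHSiff, hdecomp]
  constructor
  · -- forward
    intro hL
    apply ENNReal.add_lt_top.2 ⟨hqfin, ?_⟩
    obtain ⟨Cu, hCune, hCu⟩ := upper_bound (n := n) hn ⟨hI₀0, hI₀1⟩
    have hsplitν : (univ : Set (EuclideanSpace ℝ (Fin n)))
        = {x : EuclideanSpace ℝ (Fin n) | ‖x‖ ≤ 1}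
          ∪ {x : EuclideanSpace ℝ (Fin n) | 1 < ‖x‖} := by
      ext x; simp [le_or_gt]
    calc ∫⁻ x, (∫⁻ ξ in closedBall (0 : EuclideanSpace ℝ (Fin n)) 1,
          ENNReal.ofReal (1 - Real.cos (inner ℝ ξ x : ℝ))
            * (ENNReal.ofReal (‖ξ‖ ^ ((n:ℝ) + I₀)))⁻¹) ∂ν
        = ∫⁻ x in {x : EuclideanSpace ℝ (Fin n) | ‖x‖ ≤ 1}
            ∪ {x : EuclideanSpace ℝ (Fin n) | 1 < ‖x‖},
            (∫⁻ ξ in closedBall (0 : EuclideanSpace ℝ (Fin n)) 1,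
              ENNReal.ofReal (1 - Real.cos (inner ℝ ξ x : ℝ))
                * (ENNReal.ofReal (‖ξ‖ ^ ((n:ℝ) + I₀)))⁻¹) ∂ν := by
          rw [← hsplitν, Measure.restrict_univ]
      _ ≤ (∫⁻ x in {x : EuclideanSpace ℝ (Fin n) | ‖x‖ ≤ 1},
            (∫⁻ ξ in closedBall (0 : EuclideanSpace ℝ (Fin n)) 1,
              ENNReal.ofReal (1 - Real.cos (inner ℝ ξ x : ℝ))
                * (ENNReal.ofReal (‖ξ‖ ^ ((n:ℝ) + I₀)))⁻¹) ∂ν)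
          + ∫⁻ x in {x : EuclideanSpace ℝ (Fin n) | 1 < ‖x‖},
            (∫⁻ ξ in closedBall (0 : EuclideanSpace ℝ (Fin n)) 1,
              ENNReal.ofReal (1 - Real.cos (inner ℝ ξ x : ℝ))
                * (ENNReal.ofReal (‖ξ‖ ^ ((n:ℝ) + I₀)))⁻¹) ∂ν :=
          lintegral_union_le _ _ _
      _ ≤ (Cu * ∫⁻ x, ENNReal.ofReal (min 1 (‖x‖^2)) ∂ν)
          + Cu * ∫⁻ x in {x : EuclideanSpace ℝ (Fin n) | 1 < ‖x‖},
              ENNReal.ofReal (‖x‖ ^ I₀) ∂ν := by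
          apply add_le_add
          · calc (∫⁻ x in {x : EuclideanSpace ℝ (Fin n) | ‖x‖ ≤ 1},
                (∫⁻ ξ in closedBall (0 : EuclideanSpace ℝ (Fin n)) 1,
                  ENNReal.ofReal (1 - Real.cos (inner ℝ ξ x : ℝ))
                    * (ENNReal.ofReal (‖ξ‖ ^ ((n:ℝ) + I₀)))⁻¹) ∂ν)
                ≤ ∫⁻ x in {x : EuclideanSpace ℝ (Fin n) | ‖x‖ ≤ 1},
                    Cu * ENNReal.ofReal (min 1 (‖x‖^2)) ∂ν :=
                  setLIntegral_mono' (measurableSet_le measurable_norm measurable_const)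
                    (fun x hx => (hCu x).1 hx)
              _ ≤ ∫⁻ x, Cu * ENNReal.ofReal (min 1 (‖x‖^2)) ∂ν :=
                  setLIntegral_le_lintegral _ _
              _ = Cu * ∫⁻ x, ENNReal.ofReal (min 1 (‖x‖^2)) ∂ν :=
                  lintegral_const_mul' _ _ hCune
          · calc (∫⁻ x in {x : EuclideanSpace ℝ (Fin n) | 1 < ‖x‖},
                (∫⁻ ξ in closedBall (0 : EuclideanSpace ℝ (Fin n)) 1,
                  ENNReal.ofReal (1 - Real.cos (inner ℝ ξ x : ℝ))
                    * (ENNReal.ofReal (‖ξ‖ ^ ((n:ℝ) + I₀)))⁻¹) ∂ν)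
                ≤ ∫⁻ x in {x : EuclideanSpace ℝ (Fin n) | 1 < ‖x‖},
                    Cu * ENNReal.ofReal (‖x‖ ^ I₀) ∂ν :=
                  setLIntegral_mono' hSmeas (fun x hx => (hCu x).2 (le_of_lt hx))
              _ = Cu * ∫⁻ x in {x : EuclideanSpace ℝ (Fin n) | 1 < ‖x‖},
                    ENNReal.ofReal (‖x‖ ^ I₀) ∂ν :=
                  lintegral_const_mul' _ _ hCune
      _ < ∞ := by
          apply ENNReal.add_lt_top.2
          constructor
          · exact ENNReal.mul_lt_top hCune.lt_top (levy_min_lintegral hν)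
          · exact ENNReal.mul_lt_top hCune.lt_top hL
  · -- backward
    intro hR
    have hHfin : ∫⁻ x, (∫⁻ ξ in closedBall (0 : EuclideanSpace ℝ (Fin n)) 1,
        ENNReal.ofReal (1 - Real.cos (inner ℝ ξ x : ℝ))
          * (ENNReal.ofReal (‖ξ‖ ^ ((n:ℝ) + I₀)))⁻¹) ∂ν < ∞ :=
      lt_of_le_of_lt le_add_self hR
    obtain ⟨c, hc0, hlow⟩ := lower_bound (n := n) hn (p := (n:ℝ) + I₀) (le_of_lt hppos)
    have hcne0 : ENNReal.ofReal c ≠ 0 := by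
      rw [ne_eq, ENNReal.ofReal_eq_zero, not_le]
      exact hc0
    have hpmn : ((n:ℝ) + I₀) - (n:ℝ) = I₀ := by ring
    calc ∫⁻ x in {x : EuclideanSpace ℝ (Fin n) | 1 < ‖x‖}, ENNReal.ofReal (‖x‖ ^ I₀) ∂ν
        ≤ ∫⁻ x in {x : EuclideanSpace ℝ (Fin n) | 1 < ‖x‖},
            (ENNReal.ofReal c)⁻¹
              * (∫⁻ ξ in closedBall (0 : EuclideanSpace ℝ (Fin n)) 1,
                ENNReal.ofReal (1 - Real.cos (inner ℝ ξ x : ℝ))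
                  * (ENNReal.ofReal (‖ξ‖ ^ ((n:ℝ) + I₀)))⁻¹) ∂ν := by
          apply setLIntegral_mono' hSmeas
          intro x hx
          have h1 := hlow x hx
          rw [hpmn, ENNReal.ofReal_mul hc0.le] at h1
          have h2 : ENNReal.ofReal (‖x‖ ^ I₀)
              = (ENNReal.ofReal c)⁻¹ * (ENNReal.ofReal c * ENNReal.ofReal (‖x‖ ^ I₀)) := by
            rw [← mul_assoc, ENNReal.inv_mul_cancel hcne0 ENNReal.ofReal_ne_top, one_mul]
          rw [h2]
          exact mul_le_mul' le_rfl h1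
      _ = (ENNReal.ofReal c)⁻¹
            * ∫⁻ x in {x : EuclideanSpace ℝ (Fin n) | 1 < ‖x‖},
              (∫⁻ ξ in closedBall (0 : EuclideanSpace ℝ (Fin n)) 1,
                ENNReal.ofReal (1 - Real.cos (inner ℝ ξ x : ℝ))
                  * (ENNReal.ofReal (‖ξ‖ ^ ((n:ℝ) + I₀)))⁻¹) ∂ν :=
          lintegral_const_mul' _ _ (ENNReal.inv_ne_top.2 hcne0)
      _ ≤ (ENNReal.ofReal c)⁻¹
            * ∫⁻ x, (∫⁻ ξ in closedBall (0 : EuclideanSpace ℝ (Fin n)) 1,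
                ENNReal.ofReal (1 - Real.cos (inner ℝ ξ x : ℝ))
                  * (ENNReal.ofReal (‖ξ‖ ^ ((n:ℝ) + I₀)))⁻¹) ∂ν :=
          mul_le_mul' le_rfl (setLIntegral_le_lintegral _ _)
      _ < ∞ := ENNReal.mul_lt_top (ENNReal.inv_ne_top.2 hcne0).lt_top hHfin
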